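/- Let F be a connected cover in a graph G with H̃_j(N(F); Z/2) ≠ 0 for some j ≥ 0, and suppose F is minimal in the sense that H̃_j(N(F'); Z/2) = 0 for every proper subfamily F' ⊊ F. Then for every member G_x ∈ F, the homological dimension of the graph G_x satisfies γ(G_x) ≥ j − 1. -/

import Mathlib

open Finset
open scoped symmDiff
set_option linter.unusedSectionVars false
set_option maxHeartbeats 1000000

/-- Z/2 boundary of a chain represented as a set of simplices. -/
def bdry {V : Type} [DecidableEq V] (c : Finset (Finset V)) : Finset (Finset V) :=
  (c.sup Finset.powerset).filter fun τ =>
    Odd ((c.filter fun σ => τ ⊆ σ ∧ τ.card + 1 = σ.card).card)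

def IsChainOf {V : Type} [DecidableEq V] (K : Finset (Finset V)) (d : ℕ)
    (c : Finset (Finset V)) : Prop :=
  ∀ σ ∈ c, σ ∈ K ∧ σ.card = d + 1

/-- Reduced simplicial Z/2-homology of the complex `K` is nonzero in dimension `d`. -/
def RedHomNonzero {V : Type} [DecidableEq V] (K : Finset (Finset V)) (d : ℕ) : Prop :=
  ∃ c : Finset (Finset V), IsChainOf K d c ∧ bdry c = ∅ ∧
    ∀ b : Finset (Finset V), IsChainOf K (d + 1) b → bdry b ≠ c

/-- The nerve of a finite family of nonempty finite sets. -/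
def nerveF {V ι : Type} [DecidableEq V] [Fintype V] [Fintype ι] [DecidableEq ι]
    (F : ι → Finset V) : Finset (Finset ι) :=
  Finset.univ.filter fun σ : Finset ι => σ.Nonempty ∧ (σ.inf F).Nonempty

/-- `F` is a connected cover in `G`: a family of (vertex sets of) induced subgraphs,
all of whose nonempty intersections induce connected subgraphs. -/
def IsConnCover {V ι : Type} [DecidableEq V] [Fintype V] [Fintype ι] [DecidableEq ι]
    (G : SimpleGraph V) (F : ι → Finset V) : Prop :=
  (∀ i, (F i).Nonempty) ∧
  ∀ σ : Finset ι, σ.Nonempty → (σ.inf F).Nonempty →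
    (G.induce ((σ.inf F : Finset V) : Set V)).Connected

/-- The homological dimension of `G` is at least `d`. -/
def GammaGe {V : Type} [DecidableEq V] [Fintype V] (G : SimpleGraph V) (d : ℕ) : Prop :=
  ∃ (n : ℕ) (F : Fin n → Finset V), IsConnCover G F ∧ RedHomNonzero (nerveF F) d

/-- The homological dimension of `G` equals the integer `m`:
`m` is the greatest `d` with `GammaGe G d` (and `m = -1` when there is none). -/
def HomDimEq {V : Type} [DecidableEq V] [Fintype V] (G : SimpleGraph V) (m : ℤ) : Prop :=
  (∀ d : ℕ, m < (d : ℤ) → ¬ GammaGe G d) ∧ (∀ d : ℕ, (d : ℤ) = m → GammaGe G d)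

/-- `H` is a minor of `G`. -/
def IsMinor {W V : Type} [Fintype W] [DecidableEq W] [Fintype V] [DecidableEq V]
    (H : SimpleGraph W) (G : SimpleGraph V) : Prop :=
  ∃ B : W → Finset V,
    (∀ w, (B w).Nonempty) ∧
    (∀ u w, u ≠ w → Disjoint (B u) (B w)) ∧
    (∀ w, (G.induce ((B w : Finset V) : Set V)).Connected) ∧
    (∀ u w, H.Adj u w → ∃ a ∈ B u, ∃ b ∈ B w, G.Adj a b)


section Infra
variable {α β : Type} [DecidableEq α] [DecidableEq β]

lemma mem_bdry {c : Finset (Finset α)} {τ : Finset α} :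
    τ ∈ bdry c ↔ Odd ((c.filter fun σ => τ ⊆ σ ∧ τ.card + 1 = σ.card).card) := by
  unfold bdry
  simp only [mem_filter, Finset.mem_sup, Finset.mem_powerset]
  constructor
  · rintro ⟨_, h⟩; exact h
  · intro h
    refine ⟨?_, h⟩
    have hne : (c.filter fun σ => τ ⊆ σ ∧ τ.card + 1 = σ.card).Nonempty := by
      rw [← card_pos]; exact h.pos
    obtain ⟨σ, hσ⟩ := hne
    rw [mem_filter] at hσ
    exact ⟨σ, hσ.1, hσ.2.1⟩

lemma bdry_subset_mem {c : Finset (Finset α)} {τ : Finset α} (h : τ ∈ bdry c) :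
    ∃ σ ∈ c, τ ⊆ σ := by
  rw [mem_bdry] at h
  have hne : (c.filter fun σ => τ ⊆ σ ∧ τ.card + 1 = σ.card).Nonempty := by
    rw [← card_pos]; exact h.pos
  obtain ⟨σ, hσ⟩ := hne
  rw [mem_filter] at hσ
  exact ⟨σ, hσ.1, hσ.2.1⟩

lemma card_filter_sd (p : Finset α → Prop) [DecidablePred p] (a b : Finset (Finset α)) :
    ((a ∆ b).filter p).card + 2 * (((a ∩ b).filter p).card)
      = (a.filter p).card + (b.filter p).card := by
  have h1 : a ∆ b = (a \ b) ∪ (b \ a) := by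
    rw [symmDiff_def, sup_eq_union]
  have ha : (a.filter p).card = ((a \ b).filter p).card + (((a ∩ b)).filter p).card := by
    rw [← card_union_of_disjoint (disjoint_filter_filter (disjoint_sdiff_inter a b)),
      ← filter_union, sdiff_union_inter]
  have hb : (b.filter p).card = ((b \ a).filter p).card + (((a ∩ b)).filter p).card := by
    rw [inter_comm]
    rw [← card_union_of_disjoint (disjoint_filter_filter (disjoint_sdiff_inter b a)),
      ← filter_union, sdiff_union_inter]
  have hd : Disjoint ((a \ b).filter p) ((b \ a).filter p) :=
    disjoint_filter_filter disjoint_sdiff_sdiff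
  rw [h1, filter_union, card_union_of_disjoint hd]
  omega

lemma bdry_symmDiff (a b : Finset (Finset α)) : bdry (a ∆ b) = (bdry a) ∆ (bdry b) := by
  ext τ
  rw [Finset.mem_symmDiff, mem_bdry, mem_bdry, mem_bdry]
  have := card_filter_sd (fun σ => τ ⊆ σ ∧ τ.card + 1 = σ.card) a b
  simp only [Nat.odd_iff] at *
  omega

lemma bdry_empty : bdry (∅ : Finset (Finset α)) = ∅ := by
  simp [bdry]

/-- Pushforward of a chain along a vertex map. -/
def pushC (f : α → β) (c : Finset (Finset α)) : Finset (Finset β) :=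
  c.image (Finset.image f)

lemma pushC_injective {f : α → β} (hf : Function.Injective f) :
    Function.Injective (pushC f) :=
  Finset.image_injective (Finset.image_injective hf)

lemma count_pushC {f : α → β} (hf : Function.Injective f) (c : Finset (Finset α))
    (τ : Finset α) :
    (((pushC f c)).filter fun ρ => τ.image f ⊆ ρ ∧ (τ.image f).card + 1 = ρ.card).card
      = (c.filter fun σ => τ ⊆ σ ∧ τ.card + 1 = σ.card).card := by
  unfold pushC
  rw [filter_image, card_image_of_injOn ((Finset.image_injective hf).injOn)]
  congr 1
  apply filter_congr
  intro σ _
  simp only [Finset.image_subset_image_iff hf, Finset.card_image_of_injective _ hf]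

lemma bdry_pushC {f : α → β} (hf : Function.Injective f) (c : Finset (Finset α)) :
    bdry (pushC f c) = pushC f (bdry c) := by
  ext ρ
  constructor
  · intro h
    obtain ⟨σ', hσ', hsub⟩ := bdry_subset_mem h
    obtain ⟨σ0, _, rfl⟩ := Finset.mem_image.1 hσ'
    set τ := σ0.filter (fun a => f a ∈ ρ) with hτ
    have hρ : τ.image f = ρ := by
      ext b
      simp only [hτ, Finset.mem_image, mem_filter]
      constructor
      · rintro ⟨a, ⟨_, ha⟩, rfl⟩; exact ha
      · intro hb
        obtain ⟨a, ha, rfl⟩ := Finset.mem_image.1 (hsub hb)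
        exact ⟨a, ⟨ha, hb⟩, rfl⟩
    rw [← hρ] at h ⊢
    rw [mem_bdry, count_pushC hf] at h
    exact Finset.mem_image_of_mem _ (mem_bdry.2 h)
  · intro h
    obtain ⟨τ, hτ, rfl⟩ := Finset.mem_image.1 h
    rw [mem_bdry] at hτ ⊢
    rwa [count_pushC hf]

lemma pull_image {f : α → β} [Fintype α] {σ : Finset β} (h : ∀ b ∈ σ, ∃ a, f a = b) :
    ((univ.filter fun a => f a ∈ σ).image f) = σ := by
  ext b
  simp only [Finset.mem_image, mem_filter, mem_univ, true_and]
  constructor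
  · rintro ⟨a, ha, rfl⟩; exact ha
  · intro hb; obtain ⟨a, rfl⟩ := h b hb; exact ⟨a, hb, rfl⟩

lemma pushC_pull {f : α → β} [Fintype α] (c' : Finset (Finset β))
    (h : ∀ σ ∈ c', ∀ b ∈ σ, ∃ a, f a = b) :
    pushC f (c'.image fun σ => univ.filter fun a => f a ∈ σ) = c' := by
  unfold pushC
  rw [Finset.image_image]
  have : ∀ σ ∈ c', ((univ.filter fun a => f a ∈ σ).image f) = σ := fun σ hσ =>
    pull_image (h σ hσ)
  calc c'.image (Finset.image f ∘ fun σ => univ.filter fun a => f a ∈ σ)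
      = c'.image id := Finset.image_congr (fun σ hσ => this σ hσ)
    _ = c' := Finset.image_id

/-- Boundary of a cone. -/
lemma bdry_cone {x : α} {b : Finset (Finset α)} (hx : ∀ τ ∈ b, x ∉ τ) :
    bdry (b.image (insert x)) = b ∪ (bdry b).image (insert x) := by
  have hbd_nox : ∀ τ ∈ bdry b, x ∉ τ := by
    intro τ hτ
    obtain ⟨σ, hσ, hsub⟩ := bdry_subset_mem hτ
    exact fun hxt => hx σ hσ (hsub hxt)
  have hinj : Set.InjOn (insert x) (↑b : Set (Finset α)) := by
    intro s hs t ht hst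
    have : (insert x s).erase x = (insert x t).erase x := by rw [hst]
    rwa [Finset.erase_insert (hx s hs), Finset.erase_insert (hx t ht)] at this
  ext ρ
  rw [mem_bdry, filter_image, card_image_of_injOn (hinj.mono (Finset.coe_subset.2 (filter_subset _ _)))]
  by_cases hxρ : x ∈ ρ
  · have hcongr : (b.filter fun τ => ρ ⊆ insert x τ ∧ ρ.card + 1 = (insert x τ).card)
        = b.filter fun τ => ρ.erase x ⊆ τ ∧ (ρ.erase x).card + 1 = τ.card := by
      apply filter_congr
      intro τ hτ
      rw [Finset.card_insert_of_notMem (hx τ hτ), Finset.subset_insert_iff]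
      have : ρ.card = (ρ.erase x).card + 1 := (Finset.card_erase_add_one hxρ).symm
      constructor <;> (rintro ⟨h1, h2⟩; exact ⟨h1, by omega⟩)
    rw [hcongr]
    have hρb : ρ ∉ b := fun h => hx ρ h hxρ
    have himg : ρ ∈ (bdry b).image (insert x) ↔ ρ.erase x ∈ bdry b := by
      constructor
      · intro h
        obtain ⟨τ, hτ, h2⟩ := Finset.mem_image.1 h
        subst h2
        rwa [Finset.erase_insert (hbd_nox τ hτ)]
      · intro h
        exact Finset.mem_image.2 ⟨ρ.erase x, h, Finset.insert_erase hxρ⟩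
    rw [Finset.mem_union]
    simp only [hρb, false_or, himg, mem_bdry]
  · have hcongr : (b.filter fun τ => ρ ⊆ insert x τ ∧ ρ.card + 1 = (insert x τ).card)
        = b.filter fun τ => τ = ρ := by
      apply filter_congr
      intro τ hτ
      rw [Finset.card_insert_of_notMem (hx τ hτ), Finset.subset_insert_iff_of_notMem hxρ]
      constructor
      · rintro ⟨h1, h2⟩
        exact (Finset.eq_of_subset_of_card_le h1 (by omega)).symm
      · rintro rfl; exact ⟨subset_rfl, rfl⟩
    rw [hcongr, Finset.filter_eq']
    have hρimg : ρ ∉ (bdry b).image (insert x) := by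
      intro h
      obtain ⟨τ, _, h2⟩ := Finset.mem_image.1 h
      subst h2
      exact hxρ (Finset.mem_insert_self x τ)
    rw [Finset.mem_union]
    by_cases hρb : ρ ∈ b
    · simp [hρb, hρimg]
    · simp [hρb, hρimg]

lemma mem_inf_finset {s : Finset α} {f : α → Finset β} [Fintype β] {v : β} :
    v ∈ s.inf f ↔ ∀ a ∈ s, v ∈ f a := by
  induction s using Finset.induction_on with
  | empty => simp [Finset.inf_empty, Finset.top_eq_univ]
  | insert _ _ ha ih => simp [Finset.inf_insert, Finset.inf_eq_inter, ih]

end Infra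

lemma mem_nerveF {V ι : Type} [DecidableEq V] [Fintype V] [Fintype ι] [DecidableEq ι]
    {F : ι → Finset V} {σ : Finset ι} :
    σ ∈ nerveF F ↔ σ.Nonempty ∧ (σ.inf F).Nonempty := by
  simp [nerveF]

lemma sub_bound {V : Type} [Fintype V] [DecidableEq V] {n j : ℕ} {F : Fin n → Finset V}
    (hmin : ∀ S : Finset (Fin n), S ≠ Finset.univ →
      ¬ RedHomNonzero (nerveF fun i : ↥S => F i.1) j)
    (S : Finset (Fin n)) (hS : S ≠ Finset.univ) (c' : Finset (Finset (Fin n)))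
    (hch : ∀ σ ∈ c', σ ∈ nerveF F ∧ σ.card = j + 1 ∧ σ ⊆ S)
    (hcy : bdry c' = ∅) :
    ∃ f, IsChainOf (nerveF F) (j + 1) f ∧ bdry f = c' := by
  classical
  have hvalinj : Function.Injective (Subtype.val : ↥S → Fin n) := Subtype.val_injective
  set pull : Finset (Fin n) → Finset ↥S := fun σ => univ.filter fun a : ↥S => a.1 ∈ σ
    with hpulldef
  set c'' : Finset (Finset ↥S) := c'.image pull with hc''
  have hsurj : ∀ σ ∈ c', ∀ b ∈ σ, ∃ a : ↥S, a.1 = b := fun σ hσ b hb =>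
    ⟨⟨b, (hch σ hσ).2.2 hb⟩, rfl⟩
  have hpush : pushC (Subtype.val : ↥S → Fin n) c'' = c' := pushC_pull c' hsurj
  have himg : ∀ σ ∈ c', (pull σ).image (Subtype.val : ↥S → Fin n) = σ := fun σ hσ =>
    pull_image (hsurj σ hσ)
  have hchain : IsChainOf (nerveF fun i : ↥S => F i.1) j c'' := by
    intro σ' hσ'
    obtain ⟨σ, hσ, rfl⟩ := Finset.mem_image.1 hσ'
    obtain ⟨hK, hcard, -⟩ := hch σ hσ
    rw [mem_nerveF] at hK
    have himgσ := himg σ hσ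
    constructor
    · rw [mem_nerveF]
      constructor
      · rw [← Finset.image_nonempty (f := (Subtype.val : ↥S → Fin n)), himgσ]
        exact hK.1
      · have : ((pull σ).image (Subtype.val : ↥S → Fin n)).inf F
            = (pull σ).inf fun i : ↥S => F i.1 := Finset.inf_image _ _ _
        rw [himgσ] at this
        rw [← this]
        exact hK.2
    · have := Finset.card_image_of_injective (pull σ) hvalinj
      rw [himgσ] at this
      omega
  have hcycle : bdry c'' = ∅ := by
    apply pushC_injective hvalinj
    rw [← bdry_pushC hvalinj, hpush, hcy]
    simp [pushC]
  have h2 := hmin S hS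
  rw [RedHomNonzero] at h2
  push_neg at h2
  obtain ⟨b'', hb1, hb2⟩ := h2 c'' hchain hcycle
  refine ⟨pushC (Subtype.val : ↥S → Fin n) b'', ?_, ?_⟩
  · intro σ hσ
    obtain ⟨σ', hσ', rfl⟩ := Finset.mem_image.1 hσ
    obtain ⟨hK, hcard⟩ := hb1 σ' hσ'
    rw [mem_nerveF] at hK
    constructor
    · rw [mem_nerveF]
      refine ⟨Finset.image_nonempty.2 hK.1, ?_⟩
      rw [Finset.inf_image]
      exact hK.2
    · rw [Finset.card_image_of_injective _ hvalinj]; omega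
  · rw [bdry_pushC hvalinj, hb2, hpush]

/-- if `F` is a connected cover in `G` with `H̃_j(N(F)) ≠ 0`, minimal in the
sense that every proper subfamily has vanishing `H̃_j`, then every member `G_x ∈ F`
satisfies `γ(G_x) ≥ j - 1`. -/
theorem stmt5 {V : Type} [Fintype V] [DecidableEq V] (G : SimpleGraph V)
    (n : ℕ) (F : Fin n → Finset V) (j : ℕ)
    (hcov : IsConnCover G F)
    (hH : RedHomNonzero (nerveF F) j)
    (hmin : ∀ S : Finset (Fin n), S ≠ Finset.univ →
      ¬ RedHomNonzero (nerveF fun i : ↥S => F i.1) j) :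
    ∀ x : Fin n, 1 ≤ j → GammaGe (G.induce ((F x : Finset V) : Set V)) (j - 1) := by
  classical
  intro x hj
  obtain ⟨c, hc, hcyc, hnb⟩ := hH
  -- the subfamily omitting x
  have hSne : (univ.erase x : Finset (Fin n)) ≠ univ := by
    intro h
    exact (Finset.erase_eq_self.1 h) (mem_univ x)
  -- split c
  set cx := c.filter (fun σ => x ∈ σ) with hcxdef
  set c0 := c.filter (fun σ => x ∉ σ) with hc0def
  have hsplit : cx ∪ c0 = c := Finset.filter_union_filter_not_eq _ c
  have hdisj : Disjoint cx c0 := Finset.disjoint_filter_filter_not c c _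
  have hsym : cx ∆ c0 = c := by
    rw [hdisj.symmDiff_eq_sup, Finset.sup_eq_union, hsplit]
  have hcx_mem : ∀ σ ∈ cx, x ∈ σ := fun σ hσ => (Finset.mem_filter.1 hσ).2
  have hc0_mem : ∀ σ ∈ c0, x ∉ σ := fun σ hσ => (Finset.mem_filter.1 hσ).2
  -- step: cx nonempty
  have hcxne : cx.Nonempty := by
    rw [Finset.nonempty_iff_ne_empty]
    intro hcxe
    have hcall : ∀ σ ∈ c, x ∉ σ := by
      intro σ hσ hxσ
      have : σ ∈ cx := Finset.mem_filter.2 ⟨hσ, hxσ⟩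
      rw [hcxe] at this
      exact absurd this (Finset.notMem_empty σ)
    obtain ⟨f, hf, hbf⟩ := sub_bound hmin (univ.erase x) hSne c
      (fun σ hσ => ⟨(hc σ hσ).1, (hc σ hσ).2,
        fun i hi => Finset.mem_erase.2 ⟨fun h => hcall σ hσ (h ▸ hi), mem_univ i⟩⟩) hcyc
    exact hnb f hf hbf
  -- the index set of the link cover
  set T : Finset (Fin n) := univ.filter (fun i => i ≠ x ∧ (F i ∩ F x).Nonempty) with hTdef
  set m := T.card with hmdef
  set eqv : Fin m ≃ ↥T := T.equivFin.symm with heqv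
  set g : Fin m → Fin n := fun k => (eqv k).1 with hgdef
  have hginj : Function.Injective g := fun a b h => eqv.injective (Subtype.ext h)
  have hgmem : ∀ k, g k ∈ T := fun k => (eqv k).2
  have hgrange : ∀ i ∈ T, ∃ k, g k = i := by
    intro i hi
    exact ⟨eqv.symm ⟨i, hi⟩, by simp [hgdef]⟩
  have hgne : ∀ k, g k ≠ x := fun k => ((Finset.mem_filter.1 (hgmem k)).2).1
  -- the link cover
  set A : Set V := ((F x : Finset V) : Set V) with hAdef
  set L : Fin m → Finset ↥A := fun k => univ.filter (fun v => v.1 ∈ F (g k)) with hLdef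
  have hmemL : ∀ (k : Fin m) (v : ↥A), v ∈ L k ↔ v.1 ∈ F (g k) := by
    intro k v; simp [hLdef]
  -- inf characterization
  have hinfL : ∀ (σ : Finset (Fin m)) (v : ↥A),
      v ∈ σ.inf L ↔ ∀ k ∈ σ, v.1 ∈ F (g k) := by
    intro σ v
    rw [mem_inf_finset]
    constructor
    · intro h k hk; exact (hmemL k v).1 (h k hk)
    · intro h k hk; exact (hmemL k v).2 (h k hk)
  have hinfF : ∀ (σ : Finset (Fin m)) (v : V),
      v ∈ (insert x (σ.image g)).inf F ↔ v ∈ F x ∧ ∀ k ∈ σ, v ∈ F (g k) := by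
    intro σ v
    rw [mem_inf_finset]
    constructor
    · intro h
      refine ⟨h x (Finset.mem_insert_self x _), fun k hk =>
        h (g k) (Finset.mem_insert_of_mem (Finset.mem_image_of_mem g hk))⟩
    · rintro ⟨h1, h2⟩ i hi
      rcases Finset.mem_insert.1 hi with rfl | hi
      · exact h1
      · obtain ⟨k, hk, rfl⟩ := Finset.mem_image.1 hi
        exact h2 k hk
  have hinf_iff : ∀ σ : Finset (Fin m),
      (σ.inf L).Nonempty ↔ ((insert x (σ.image g)).inf F).Nonempty := by
    intro σ
    constructor
    · rintro ⟨v, hv⟩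
      exact ⟨v.1, (hinfF σ v.1).2 ⟨v.2, (hinfL σ v).1 hv⟩⟩
    · rintro ⟨v, hv⟩
      rw [hinfF] at hv
      exact ⟨⟨v, hv.1⟩, (hinfL σ ⟨v, hv.1⟩).2 hv.2⟩
  -- connected cover
  have hcov' : IsConnCover (G.induce A) L := by
    constructor
    · intro k
      obtain ⟨v, hv⟩ := ((Finset.mem_filter.1 (hgmem k)).2).2
      rw [Finset.mem_inter] at hv
      exact ⟨⟨v, hv.2⟩, (hmemL k _).2 hv.1⟩
    · intro σ hσne hσinf
      have hinf2 : ((insert x (σ.image g)).inf F).Nonempty := (hinf_iff σ).1 hσinf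
      have hconn := hcov.2 (insert x (σ.image g)) (Finset.insert_nonempty _ _) hinf2
      have key : ∀ (v : V) (h : v ∈ A),
          ((⟨v, h⟩ : ↥A) ∈ σ.inf L ↔ v ∈ (insert x (σ.image g)).inf F) := by
        intro v h
        rw [hinfL, hinfF]
        exact ⟨fun hh => ⟨h, hh⟩, fun hh => hh.2⟩
      have hmemA : ∀ v : V, v ∈ (insert x (σ.image g)).inf F → v ∈ A := by
        intro v hv
        exact ((hinfF σ v).1 hv).1
      let e : ((G.induce A).induce ((σ.inf L : Finset ↥A) : Set ↥A)) ≃g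
          (G.induce (((insert x (σ.image g)).inf F : Finset V) : Set V)) :=
        { toFun := fun p => ⟨p.1.1, (key p.1.1 p.1.2).1 p.2⟩
          invFun := fun q => ⟨⟨q.1, hmemA q.1 q.2⟩, (key q.1 (hmemA q.1 q.2)).2 q.2⟩
          left_inv := fun p => by ext; rfl
          right_inv := fun q => by ext; rfl
          map_rel_iff' := by intro p q; exact Iff.rfl }
      exact e.symm.connected_iff.1 hconn
  -- the chain d in the link
  set d := cx.image (fun σ => σ.erase x) with hddef
  have hd_nox : ∀ τ ∈ d, x ∉ τ := by
    intro τ hτ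
    obtain ⟨σ, hσ, rfl⟩ := Finset.mem_image.1 hτ
    exact Finset.notMem_erase x σ
  have hd_card : ∀ τ ∈ d, τ.card = j := by
    intro τ hτ
    obtain ⟨σ, hσ, rfl⟩ := Finset.mem_image.1 hτ
    have h1 := (hc σ (Finset.filter_subset _ c hσ)).2
    rw [Finset.card_erase_of_mem (hcx_mem σ hσ)]
    omega
  have hcx_img : d.image (insert x) = cx := by
    rw [hddef, Finset.image_image]
    calc cx.image (insert x ∘ fun σ => σ.erase x) = cx.image id :=
          Finset.image_congr (fun σ hσ => Finset.insert_erase (hcx_mem σ hσ))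
      _ = cx := Finset.image_id
  have hd_subT : ∀ τ ∈ d, ∀ i ∈ τ, i ∈ T := by
    intro τ hτ i hi
    obtain ⟨σ, hσ, rfl⟩ := Finset.mem_image.1 hτ
    have hiσ := Finset.mem_of_mem_erase hi
    have hKσ := (hc σ (Finset.filter_subset _ c hσ)).1
    rw [mem_nerveF] at hKσ
    obtain ⟨v, hv⟩ := hKσ.2
    rw [mem_inf_finset] at hv
    refine Finset.mem_filter.2 ⟨mem_univ i, Finset.ne_of_mem_erase hi, ⟨v, ?_⟩⟩
    exact Finset.mem_inter.2 ⟨hv i hiσ, hv x (hcx_mem σ hσ)⟩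
  -- boundary computations
  have hbdry_eq : bdry cx = bdry c0 := by
    have h0 : bdry cx ∆ bdry c0 = (⊥ : Finset (Finset (Fin n))) := by
      rw [← bdry_symmDiff, hsym, hcyc, Finset.bot_eq_empty]
    exact symmDiff_eq_bot.1 h0
  have hcone_cx : bdry cx = d ∪ (bdry d).image (insert x) := by
    conv_lhs => rw [← hcx_img]
    exact bdry_cone hd_nox
  have hbc0_nox : ∀ ρ ∈ bdry c0, x ∉ ρ := by
    intro ρ hρ hxρ
    obtain ⟨σ, hσ, hsub⟩ := bdry_subset_mem hρ
    exact hc0_mem σ hσ (hsub hxρ)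
  have himg_e : (bdry d).image (insert x) = ∅ := by
    rw [Finset.eq_empty_iff_forall_notMem]
    intro ρ hρ
    have hxρ : x ∈ ρ := by
      obtain ⟨τ, _, h2⟩ := Finset.mem_image.1 hρ
      subst h2
      exact Finset.mem_insert_self x τ
    have hρc0 : ρ ∈ bdry c0 := by
      rw [← hbdry_eq, hcone_cx]
      exact Finset.mem_union_right _ hρ
    exact hbc0_nox ρ hρc0 hxρ
  have hbd : bdry d = ∅ := Finset.image_eq_empty.1 himg_e
  have hbc0 : bdry c0 = d := by
    rw [← hbdry_eq, hcone_cx, himg_e, Finset.union_empty]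
  -- pull d back to Fin m
  set d' := d.image (fun τ => (univ : Finset (Fin m)).filter fun k => g k ∈ τ) with hd'def
  have hdpull : ∀ τ ∈ d, ∀ i ∈ τ, ∃ k, g k = i := fun τ hτ i hi =>
    hgrange i (hd_subT τ hτ i hi)
  have hpushd : pushC g d' = d := pushC_pull d hdpull
  have himgd : ∀ τ ∈ d, (((univ : Finset (Fin m)).filter fun k => g k ∈ τ).image g) = τ :=
    fun τ hτ => pull_image (hdpull τ hτ)
  refine ⟨m, L, hcov', d', ?_, ?_, ?_⟩
  · -- d' is a (j-1)-chain of the link nerve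
    intro σ' hσ'
    obtain ⟨τ, hτ, rfl⟩ := Finset.mem_image.1 hσ'
    have himgτ := himgd τ hτ
    obtain ⟨σ, hσ, hσe⟩ := Finset.mem_image.1 hτ
    have hcards : ((univ : Finset (Fin m)).filter fun k => g k ∈ τ).card = τ.card := by
      conv_rhs => rw [← himgτ]
      rw [Finset.card_image_of_injective _ hginj]
    constructor
    · rw [mem_nerveF]
      constructor
      · rw [← Finset.image_nonempty (f := g), himgτ, ← Finset.card_pos, hd_card τ hτ]
        omega
      · refine (hinf_iff _).2 ?_
        rw [himgτ, ← hσe, Finset.insert_erase (hcx_mem σ hσ)]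
        have hKσ := (hc σ (Finset.filter_subset _ c hσ)).1
        rw [mem_nerveF] at hKσ
        exact hKσ.2
    · rw [hcards, hd_card τ hτ]
      omega
  · -- d' is a cycle
    apply pushC_injective hginj
    rw [← bdry_pushC hginj, hpushd, hbd]
    simp [pushC]
  · -- d' is not a boundary
    intro b' hb' hbd'
    set b := pushC g b' with hbdef
    have hb_all : ∀ τ ∈ b, x ∉ τ ∧ τ.card = j + 1 ∧ τ ∈ nerveF F ∧ insert x τ ∈ nerveF F := by
      intro τ hτ
      obtain ⟨τ', hτ', rfl⟩ := Finset.mem_image.1 hτ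
      obtain ⟨hKn, hcard⟩ := hb' τ' hτ'
      rw [mem_nerveF] at hKn
      have h2 : ((insert x (τ'.image g)).inf F).Nonempty := (hinf_iff τ').1 hKn.2
      have hxni : x ∉ τ'.image g := by
        intro h
        obtain ⟨k, _, hk⟩ := Finset.mem_image.1 h
        exact hgne k hk
      have hinfim : ((τ'.image g).inf F).Nonempty := by
        obtain ⟨v, hv⟩ := h2
        rw [mem_inf_finset] at hv
        refine ⟨v, mem_inf_finset.2 fun i hi => hv i (Finset.mem_insert_of_mem hi)⟩
      refine ⟨hxni, ?_, ?_, ?_⟩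
      · rw [Finset.card_image_of_injective _ hginj]
        omega
      · exact mem_nerveF.2 ⟨Finset.image_nonempty.2 hKn.1, hinfim⟩
      · exact mem_nerveF.2 ⟨Finset.insert_nonempty _ _, h2⟩
    have hbb : bdry b = d := by
      rw [hbdef, bdry_pushC hginj, hbd', hpushd]
    set e := b.image (insert x) with hedef
    have he_ch : IsChainOf (nerveF F) (j + 1) e := by
      intro σ hσ
      obtain ⟨τ, hτ, rfl⟩ := Finset.mem_image.1 hσ
      obtain ⟨h1, h2, h3, h4⟩ := hb_all τ hτ
      exact ⟨h4, by rw [Finset.card_insert_of_notMem h1]; omega⟩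
    have hbe : bdry e = b ∪ cx := by
      rw [hedef, bdry_cone (fun τ hτ => (hb_all τ hτ).1), hbb, hcx_img]
    set w := c0 ∆ b with hwdef
    have hw_ch : ∀ σ ∈ w, σ ∈ nerveF F ∧ σ.card = j + 1 ∧ σ ⊆ univ.erase x := by
      intro σ hσ
      have hcase : σ ∈ c0 ∨ σ ∈ b := by
        rcases Finset.mem_symmDiff.1 hσ with ⟨h, -⟩ | ⟨h, -⟩
        · exact Or.inl h
        · exact Or.inr h
      rcases hcase with h | h
      · have hσc := Finset.filter_subset _ c h
        exact ⟨(hc σ hσc).1, (hc σ hσc).2,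
          fun i hi => Finset.mem_erase.2 ⟨fun hh => hc0_mem σ h (hh ▸ hi), mem_univ i⟩⟩
      · obtain ⟨h1, h2, h3, -⟩ := hb_all σ h
        exact ⟨h3, h2, fun i hi => Finset.mem_erase.2 ⟨fun hh => h1 (hh ▸ hi), mem_univ i⟩⟩
    have hw_cy : bdry w = ∅ := by
      rw [hwdef, bdry_symmDiff, hbc0, hbb, symmDiff_self, Finset.bot_eq_empty]
    obtain ⟨f, hf, hbf⟩ := sub_bound hmin (univ.erase x) hSne w hw_ch hw_cy
    have hch_ef : IsChainOf (nerveF F) (j + 1) (e ∆ f) := by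
      intro σ hσ
      rcases Finset.mem_symmDiff.1 hσ with ⟨h, -⟩ | ⟨h, -⟩
      · exact he_ch σ h
      · exact hf σ h
    have hbeq : bdry (e ∆ f) = c := by
      rw [bdry_symmDiff, hbe, hbf, hwdef]
      have hdisj_bcx : Disjoint b cx := by
        rw [Finset.disjoint_left]
        intro σ hσ hσ2
        exact (hb_all σ hσ).1 (hcx_mem σ hσ2)
      rw [← Finset.sup_eq_union, ← hdisj_bcx.symmDiff_eq_sup]
      rw [symmDiff_comm b cx, symmDiff_comm c0 b, symmDiff_assoc,
        ← symmDiff_assoc b b c0, symmDiff_self, bot_symmDiff]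
      exact hsym
    exact hnb (e ∆ f) hch_ef hbeq
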